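/- Let M be a sparse paving matroid of rank k on n elements with λ circuit-hyperplanes. Then λ ≤ min(1/(k+1), 1/(n−k+1))·(n choose k). -/

import Mathlib

open Set

variable {α : Type*}

/-- The (natural-number valued) rank of a set `X` in a matroid `M`:
the maximum cardinality of an independent subset of `X`. -/
noncomputable def Matroid.nrk (M : Matroid α) (X : Set α) : ℕ :=
  sSup (Set.ncard '' {I | M.Indep I ∧ I ⊆ X})

/-- The rank of the matroid `M`. -/
noncomputable def Matroid.nRank (M : Matroid α) : ℕ := M.nrk M.E

/-- The cusp of a subset `A` in a matroid `M` of rank `k`: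
all `k`-element subsets `S` of the ground set with `|S ∩ A| ≥ rk A + 1`. -/
def Matroid.cusp (M : Matroid α) (A : Set α) : Set (Set α) :=
  {S | S ⊆ M.E ∧ S.ncard = M.nRank ∧ M.nrk A + 1 ≤ (S ∩ A).ncard}

/-- A subset `A` of a matroid `M` is stressed if both the restriction `M | A`
and the contraction `M / A` are uniform matroids; for a finite matroid this is
equivalent to the rank functions of the restriction and of the contraction being
those of uniform matroids. -/
def Matroid.StressedSubset (M : Matroid α) (A : Set α) : Prop :=
  (∀ S ⊆ A, M.nrk S = min S.ncard (M.nrk A)) ∧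
  (∀ Y ⊆ M.E \ A, M.nrk (A ∪ Y) = M.nrk A + min Y.ncard (M.nRank - M.nrk A))

/-- A circuit of `M`: a minimal dependent set. -/
def Matroid.Circ (M : Matroid α) (C : Set α) : Prop := Minimal M.Dep C

/-- A hyperplane of `M`: a flat of rank `rk(M) − 1`. -/
def Matroid.Hyp (M : Matroid α) (H : Set α) : Prop :=
  M.IsFlat H ∧ M.nrk H + 1 = M.nRank

section Aux

variable [Fintype α] [DecidableEq α] {M : Matroid α} {X I C C₁ C₂ : Set α} {k : ℕ}

lemma aux_nrk_nonempty (M : Matroid α) (X : Set α) :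
    (Set.ncard '' {I | M.Indep I ∧ I ⊆ X}).Nonempty :=
  ⟨0, ∅, ⟨M.empty_indep, empty_subset X⟩, Set.ncard_empty α⟩

lemma aux_ncard_le_nrk (hI : M.Indep I) (hIX : I ⊆ X) : I.ncard ≤ M.nrk X :=
  le_csSup ((Set.toFinite _).bddAbove) ⟨I, ⟨hI, hIX⟩, rfl⟩

lemma aux_nrk_witness (M : Matroid α) (X : Set α) :
    ∃ I, M.Indep I ∧ I ⊆ X ∧ I.ncard = M.nrk X := by
  have h := Nat.sSup_mem (aux_nrk_nonempty M X) ((Set.toFinite _).bddAbove)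
  obtain ⟨I, hI, hcard⟩ := h
  exact ⟨I, hI.1, hI.2, hcard⟩

lemma aux_ssubset_indep (hE : M.E = Set.univ) (hC : M.Circ C) (hI : I ⊂ C) : M.Indep I := by
  by_contra h
  have hdep : M.Dep I := ⟨h, by rw [hE]; exact subset_univ I⟩
  exact hI.ne (hI.subset.antisymm (hC.2 hdep hI.subset))

lemma aux_circ_nonempty (hC : M.Circ C) : C.Nonempty := by
  rw [Set.nonempty_iff_ne_empty]
  rintro rfl
  exact hC.1.1 M.empty_indep

/-- A circuit-hyperplane has cardinality `k`. -/
lemma aux_CH_card (hE : M.E = Set.univ) (hk : M.nRank = k)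
    (hpav : ∀ D, M.Dep D → M.nRank ≤ D.ncard)
    (hC : M.Circ C ∧ M.Hyp C) : C.ncard = k := by
  obtain ⟨e, he⟩ := aux_circ_nonempty hC.1
  have hssub : C \ {e} ⊂ C := Set.sdiff_singleton_ssubset.2 he
  have hind := aux_ssubset_indep hE hC.1 hssub
  have h1 : (C \ {e}).ncard ≤ M.nrk C := aux_ncard_le_nrk hind hssub.subset
  have h2 : (C \ {e}).ncard = C.ncard - 1 :=
    Set.ncard_diff_singleton_of_mem he
  have h3 : M.nrk C + 1 = k := by rw [hC.2.2, hk]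
  have h4 : k ≤ C.ncard := hk ▸ hpav C hC.1.1
  omega

/-- Two distinct circuit-hyperplanes intersect in at most `k - 2` elements. -/
lemma aux_CH_inter (hE : M.E = Set.univ) (hk : M.nRank = k)
    (hpav : ∀ D, M.Dep D → M.nRank ≤ D.ncard)
    (hC₁ : M.Circ C₁ ∧ M.Hyp C₁) (hC₂ : M.Circ C₂ ∧ M.Hyp C₂) (hne : C₁ ≠ C₂) :
    (C₁ ∩ C₂).ncard + 2 ≤ k := by
  by_contra hcon
  push_neg at hcon
  have e1 : C₁.ncard = k := aux_CH_card hE hk hpav hC₁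
  have e2 : C₂.ncard = k := aux_CH_card hE hk hpav hC₂
  have hk1 : 1 ≤ k := by
    have h := hC₁.2.2; rw [hk] at h; omega
  have hsub1 : C₁ ∩ C₂ ⊆ C₁ := Set.inter_subset_left
  have hsub2 : C₁ ∩ C₂ ⊆ C₂ := Set.inter_subset_right
  have hle : (C₁ ∩ C₂).ncard ≤ k := e1 ▸ Set.ncard_le_ncard hsub1 (Set.toFinite C₁)
  rcases eq_or_lt_of_le hle with heq | hlt
  · -- intersection has full size k : then C₁ = C₂
    have h1 : C₁ ∩ C₂ = C₁ := Set.eq_of_subset_of_ncard_le hsub1 (by omega) (Set.toFinite C₁)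
    have h2 : C₁ ∩ C₂ = C₂ := Set.eq_of_subset_of_ncard_le hsub2 (by omega) (Set.toFinite C₂)
    exact hne (h1 ▸ h2)
  · -- intersection has size k - 1
    have hIcard : (C₁ ∩ C₂).ncard = k - 1 := by omega
    set I : Set α := C₁ ∩ C₂ with hI
    have hIssub₂ : I ⊂ C₂ := hsub2.ssubset_of_ne (by intro h; rw [h] at hIcard; omega)
    have hIindep : M.Indep I := aux_ssubset_indep hE hC₂.1 hIssub₂
    have hdiffcard : (C₂ \ I).ncard = 1 := by
      rw [Set.ncard_diff hsub2 (Set.toFinite I)]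
      omega
    obtain ⟨e, he⟩ := Set.ncard_eq_one.1 hdiffcard
    have heC₂ : e ∈ C₂ \ I := he ▸ rfl
    have heC₁ : e ∉ C₁ := fun h => heC₂.2 ⟨h, heC₂.1⟩
    have hC₂eq : C₂ = insert e I := by
      rw [← Set.union_diff_cancel hsub2, he, Set.union_singleton]
    have hnrkC₁ : M.nrk C₁ = k - 1 := by
      have := hC₁.2.2; omega
    -- I is a basis of C₁
    have hB1 : M.IsBasis I C₁ := by
      rw [Matroid.isBasis_iff (by rw [hE]; exact subset_univ C₁)]
      refine ⟨hIindep, hsub1, fun J hJ hIJ hJC₁ => ?_⟩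
      have hJle : J.ncard ≤ k - 1 := hnrkC₁ ▸ aux_ncard_le_nrk hJ hJC₁
      exact Set.eq_of_subset_of_ncard_le hIJ (by omega) (Set.toFinite J)
    -- I is a basis of insert e I
    have hB2 : M.IsBasis I (insert e I) := by
      rw [Matroid.isBasis_iff (by rw [hE]; exact subset_univ _)]
      refine ⟨hIindep, Set.subset_insert e I, fun J hJ hIJ hJins => ?_⟩
      by_cases heJ : e ∈ J
      · exfalso
        have : J = C₂ := by
          rw [hC₂eq]
          exact hJins.antisymm (Set.insert_subset heJ hIJ)
        exact hC₂.1.1.1 (this ▸ hJ)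
      · refine hIJ.antisymm fun x hx => ?_
        rcases hJins hx with h | h
        · exact absurd (h ▸ hx) heJ
        · exact h
    have : insert e I ⊆ C₁ := hC₁.2.1.subset_of_isBasis_of_isBasis hB1 hB2
    exact heC₁ (this (Set.mem_insert e I))

/-- Counting via `(k-1)`-subsets. -/
lemma aux_count_low (hk : 1 ≤ k) (Λ : Finset (Finset α))
    (hcard : ∀ F ∈ Λ, F.card = k)
    (hint : ∀ F₁ ∈ Λ, ∀ F₂ ∈ Λ, F₁ ≠ F₂ → (F₁ ∩ F₂).card + 2 ≤ k) :
    Λ.card * k ≤ (Fintype.card α).choose (k - 1) := by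
  classical
  have hd : ∀ F₁ ∈ Λ, ∀ F₂ ∈ Λ, F₁ ≠ F₂ →
      Disjoint (F₁.powersetCard (k-1)) (F₂.powersetCard (k-1)) := by
    intro F₁ h1 F₂ h2 hne
    rw [Finset.disjoint_left]
    intro T hT1 hT2
    rw [Finset.mem_powersetCard] at hT1 hT2
    have h3 := Finset.card_le_card (Finset.subset_inter hT1.1 hT2.1)
    have h4 := hint F₁ h1 F₂ h2 hne
    omega
  have hsum : ∑ F ∈ Λ, (F.powersetCard (k-1)).card = Λ.card * k := by
    rw [Finset.sum_congr rfl (g := fun _ => k) fun F hF => by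
      rw [Finset.card_powersetCard, hcard F hF, Nat.choose_symm hk, Nat.choose_one_right]]
    rw [Finset.sum_const, smul_eq_mul, mul_comm]
  rw [← hsum, ← Finset.card_biUnion hd]
  have hsub : Λ.biUnion (fun F => F.powersetCard (k-1)) ⊆
      Finset.univ.powersetCard (k-1) := by
    intro T hT
    rw [Finset.mem_biUnion] at hT
    obtain ⟨F, _, hTF⟩ := hT
    rw [Finset.mem_powersetCard] at hTF ⊢
    exact ⟨Finset.subset_univ _, hTF.2⟩
  have := Finset.card_le_card hsub
  rwa [Finset.card_powersetCard, Finset.card_univ] at this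

/-- Counting via `(k+1)`-supersets. -/
lemma aux_count_high (Λ : Finset (Finset α))
    (hcard : ∀ F ∈ Λ, F.card = k)
    (hint : ∀ F₁ ∈ Λ, ∀ F₂ ∈ Λ, F₁ ≠ F₂ → (F₁ ∩ F₂).card + 2 ≤ k) :
    Λ.card * (Fintype.card α - k) ≤ (Fintype.card α).choose (k + 1) := by
  classical
  set t : Finset α → Finset (Finset α) :=
    fun F => (Finset.univ \ F).image (fun e => insert e F) with ht
  have htmem : ∀ F, ∀ S ∈ t F, F ⊆ S ∧ S.card = F.card + 1 := by
    intro F S hS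
    rw [ht, Finset.mem_image] at hS
    obtain ⟨e, he, rfl⟩ := hS
    rw [Finset.mem_sdiff] at he
    exact ⟨Finset.subset_insert e F, Finset.card_insert_of_notMem he.2⟩
  have htcard : ∀ F ∈ Λ, (t F).card = Fintype.card α - k := by
    intro F hF
    rw [ht, Finset.card_image_of_injOn, Finset.card_sdiff_of_subset (Finset.subset_univ F),
      Finset.card_univ, hcard F hF]
    intro e he e' he' hee
    rw [Finset.mem_coe, Finset.mem_sdiff] at he he'
    have hee' : insert e F = insert e' F := hee
    have : e ∈ insert e' F := by rw [← hee']; exact Finset.mem_insert_self e F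
    rcases Finset.mem_insert.1 this with h | h
    · exact h
    · exact absurd h he.2
  have hd : ∀ F₁ ∈ Λ, ∀ F₂ ∈ Λ, F₁ ≠ F₂ → Disjoint (t F₁) (t F₂) := by
    intro F₁ h1 F₂ h2 hne
    rw [Finset.disjoint_left]
    intro S hS1 hS2
    obtain ⟨hsub1, hc1⟩ := htmem F₁ S hS1
    obtain ⟨hsub2, hc2⟩ := htmem F₂ S hS2
    have hunion : F₁ ∪ F₂ ⊆ S := Finset.union_subset hsub1 hsub2
    have h3 := Finset.card_le_card hunion
    have h4 := Finset.card_inter_add_card_union F₁ F₂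
    have h5 := hint F₁ h1 F₂ h2 hne
    have e1 := hcard F₁ h1
    have e2 := hcard F₂ h2
    omega
  have hsum : ∑ F ∈ Λ, (t F).card = Λ.card * (Fintype.card α - k) := by
    rw [Finset.sum_congr rfl htcard, Finset.sum_const, smul_eq_mul]
  rw [← hsum, ← Finset.card_biUnion hd]
  have hsub : Λ.biUnion t ⊆ Finset.univ.powersetCard (k + 1) := by
    intro S hS
    rw [Finset.mem_biUnion] at hS
    obtain ⟨F, hF, hSF⟩ := hS
    rw [Finset.mem_powersetCard]
    obtain ⟨_, hc⟩ := htmem F S hSF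
    exact ⟨Finset.subset_univ _, by rw [hc, hcard F hF]⟩
  have := Finset.card_le_card hsub
  rwa [Finset.card_powersetCard, Finset.card_univ] at this

lemma aux_arith1 {lam n k : ℕ} (hk : 1 ≤ k) (hkn : k ≤ n)
    (h : lam * k ≤ n.choose (k - 1)) : lam * (n - k + 1) ≤ n.choose k := by
  have hid : n.choose k * k = n.choose (k-1) * (n - k + 1) := by
    have h1 := Nat.choose_succ_right_eq n (k-1)
    have h2 : k - 1 + 1 = k := by omega
    have h3 : n - (k - 1) = n - k + 1 := by omega
    rw [h2, h3] at h1
    exact h1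
  have h4 : lam * k * (n - k + 1) ≤ n.choose (k-1) * (n - k + 1) :=
    Nat.mul_le_mul_right _ h
  rw [← hid] at h4
  have h5 : lam * (n - k + 1) * k ≤ n.choose k * k := by
    rw [mul_right_comm] at h4
    exact h4
  exact Nat.le_of_mul_le_mul_right h5 hk

lemma aux_arith2 {lam n k : ℕ} (hkn : k < n)
    (h : lam * (n - k) ≤ n.choose (k + 1)) : lam * (k + 1) ≤ n.choose k := by
  have hid := Nat.choose_succ_right_eq n k
  have h4 : lam * (n - k) * (k + 1) ≤ n.choose (k+1) * (k+1) :=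
    Nat.mul_le_mul_right _ h
  rw [hid] at h4
  have h5 : lam * (k + 1) * (n - k) ≤ n.choose k * (n - k) := by
    rw [mul_right_comm] at h4
    exact h4
  exact Nat.le_of_mul_le_mul_right h5 (by omega)

end Aux

/-- if `M` is a sparse paving matroid (both `M` and its dual are paving)
of rank `k` on `n` elements with `λ` circuit-hyperplanes, then
`λ ≤ min(1/(k+1), 1/(n−k+1))·(n choose k)`. -/
theorem sparse_paving_circuit_hyperplane_bound [Fintype α] (M : Matroid α)
    (hE : M.E = Set.univ) {n k lam : ℕ} (hn : Fintype.card α = n) (hk : M.nRank = k)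
    (hpav : ∀ D, M.Dep D → M.nRank ≤ D.ncard)
    (hpav' : ∀ D, M✶.Dep D → M✶.nRank ≤ D.ncard)
    (hlam : {C : Set α | M.Circ C ∧ M.Hyp C}.ncard = lam) :
    (lam : ℚ) ≤ min (1 / ((k : ℚ) + 1)) (1 / (((n - k : ℕ) : ℚ) + 1)) * n.choose k := by
  classical
  set Λ : Set (Set α) := {C : Set α | M.Circ C ∧ M.Hyp C} with hΛdef
  rcases Nat.eq_zero_or_pos lam with h0 | hpos
  · subst h0
    rw [Nat.cast_zero]
    exact mul_nonneg (le_min (by positivity) (by positivity)) (by positivity)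
  -- there exists a circuit-hyperplane
  have hΛne : Λ.Nonempty := (Set.ncard_pos (Set.toFinite Λ)).1 (hlam ▸ hpos)
  obtain ⟨C₀, hC₀⟩ := hΛne
  have hk1 : 1 ≤ k := by
    have := hC₀.2.2
    rw [hk] at this
    omega
  have hC₀card : C₀.ncard = k := aux_CH_card hE hk hpav hC₀
  -- k < n
  have hkn : k < n := by
    have hC₀ne : C₀ ≠ Set.univ := by
      intro h
      have h1 : M.nrk C₀ + 1 = k := by rw [hC₀.2.2, hk]
      have h2 : M.nrk C₀ = k := by
        rw [h]
        rw [Matroid.nRank, hE] at hk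
        exact hk
      omega
    have hssub : C₀ ⊂ Set.univ := (subset_univ C₀).ssubset_of_ne hC₀ne
    have := Set.ncard_lt_ncard hssub (Set.toFinite _)
    rwa [hC₀card, Set.ncard_univ, Nat.card_eq_fintype_card, hn] at this
  -- move to Finsets
  set φ : Set α → Finset α := fun C => (Set.toFinite C).toFinset with hφ
  have hφcoe : ∀ C : Set α, (φ C : Set α) = C := fun C => Set.Finite.coe_toFinset _
  have hφinj : Function.Injective φ := fun C₁ C₂ h => by
    rw [← hφcoe C₁, ← hφcoe C₂, h]
  set ΛF : Finset (Finset α) := ((Set.toFinite Λ).toFinset).image φ with hΛF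
  have hΛFcard : ΛF.card = lam := by
    rw [hΛF, Finset.card_image_of_injective _ hφinj,
      ← Set.ncard_eq_toFinset_card Λ (Set.toFinite Λ), hlam]
  have hmem : ∀ F ∈ ΛF, ∃ C ∈ Λ, φ C = F := by
    intro F hF
    rw [hΛF, Finset.mem_image] at hF
    obtain ⟨C, hC, rfl⟩ := hF
    exact ⟨C, (Set.Finite.mem_toFinset _).1 hC, rfl⟩
  have hFcard : ∀ F ∈ ΛF, F.card = k := by
    intro F hF
    obtain ⟨C, hC, rfl⟩ := hmem F hF
    rw [← Set.ncard_coe_finset, hφcoe]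
    exact aux_CH_card hE hk hpav hC
  have hFint : ∀ F₁ ∈ ΛF, ∀ F₂ ∈ ΛF, F₁ ≠ F₂ → (F₁ ∩ F₂).card + 2 ≤ k := by
    intro F₁ h1 F₂ h2 hne
    obtain ⟨C₁, hC₁, rfl⟩ := hmem F₁ h1
    obtain ⟨C₂, hC₂, rfl⟩ := hmem F₂ h2
    have hCne : C₁ ≠ C₂ := fun h => hne (by rw [h])
    have : ((φ C₁ ∩ φ C₂ : Finset α) : Set α).ncard = (C₁ ∩ C₂).ncard := by
      rw [Finset.coe_inter, hφcoe, hφcoe]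
    rw [← Set.ncard_coe_finset, this]
    exact aux_CH_inter hE hk hpav hC₁ hC₂ hCne
  -- the two counting bounds
  have hlow : lam * k ≤ n.choose (k - 1) := by
    have := aux_count_low hk1 ΛF hFcard hFint
    rwa [hΛFcard, hn] at this
  have hhigh : lam * (n - k) ≤ n.choose (k + 1) := by
    have := aux_count_high ΛF hFcard hFint
    rwa [hΛFcard, hn] at this
  have N1 : lam * (n - k + 1) ≤ n.choose k := aux_arith1 hk1 hkn.le hlow
  have N2 : lam * (k + 1) ≤ n.choose k := aux_arith2 hkn hhigh
  -- conclude over ℚ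
  have hb1 : (lam : ℚ) ≤ 1 / ((k : ℚ) + 1) * n.choose k := by
    rw [div_mul_eq_mul_div, one_mul, le_div_iff₀ (by positivity)]
    exact_mod_cast N2
  have hb2 : (lam : ℚ) ≤ 1 / (((n - k : ℕ) : ℚ) + 1) * n.choose k := by
    rw [div_mul_eq_mul_div, one_mul, le_div_iff₀ (by positivity)]
    exact_mod_cast N1
  rcases le_total (1 / ((k : ℚ) + 1)) (1 / (((n - k : ℕ) : ℚ) + 1)) with h | h
  · rw [min_eq_left h]; exact hb1
  · rw [min_eq_right h]; exact hb2
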